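/- Let h be a symmetric 2-tensor on ℝ⁷ and i(h) = Σ ε_{ikl} h_{ij} eʲ∧eᵏ∧eˡ the associated 3-form. For Z₁, Z₂ ∈ span(e₁,e₂,e₃), define B_h(Z₁,Z₂) := (Z₁⌟i(h) ∧ Z₂⌟φ)|_{π} where π = span(e₄,…,e₇). Then B_h(Z₁,Z₂) = (4 h(Z₁,Z₂) + 2 tr(h|_π) g(Z₁,Z₂)) · e⁴∧e⁵∧e⁶∧e⁷, where tr(h|_π) = h₄₄+h₅₅+h₆₆+h₇₇. -/
import Mathlib


open scoped BigOperators

noncomputable section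

/-- standard basis vectors of ℝ⁷ (0-indexed: `e 0` = e₁, …, `e 6` = e₇) -/
def e (i : Fin 7) : Fin 7 → ℝ := fun j => if i = j then 1 else 0

/-- the 3-form eᵃ ∧ eᵇ ∧ eᶜ -/
def d3 (a b c : Fin 7) (u v w : Fin 7 → ℝ) : ℝ :=
  u a * (v b * w c - v c * w b) - u b * (v a * w c - v c * w a) + u c * (v a * w b - v b * w a)

/-- the standard G₂ 3-form φ = e¹²³ + e¹∧(e⁴⁵+e⁶⁷) + e²∧(e⁴⁶−e⁵⁷) − e³∧(e⁴⁷+e⁵⁶) -/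
def phi (u v w : Fin 7 → ℝ) : ℝ :=
  d3 0 1 2 u v w + d3 0 3 4 u v w + d3 0 5 6 u v w + d3 1 3 5 u v w
    - d3 1 4 6 u v w - d3 2 3 6 u v w - d3 2 4 5 u v w

/-- the 4-form eᵃ ∧ eᵇ ∧ eᶜ ∧ eᵈ -/
def d4 (a b c d : Fin 7) (u v w x : Fin 7 → ℝ) : ℝ :=
  Matrix.det !![u a, u b, u c, u d; v a, v b, v c, v d; w a, w b, w c, w d; x a, x b, x c, x d]

/-- ψ = ⋆φ = e⁴⁵⁶⁷ + e²³∧(e⁴⁵+e⁶⁷) − e¹³∧(e⁴⁶−e⁵⁷) − e¹²∧(e⁴⁷+e⁵⁶) -/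
def psi (u v w x : Fin 7 → ℝ) : ℝ :=
  d4 3 4 5 6 u v w x + d4 1 2 3 4 u v w x + d4 1 2 5 6 u v w x - d4 0 2 3 5 u v w x
    + d4 0 2 4 6 u v w x - d4 0 1 3 6 u v w x - d4 0 1 4 5 u v w x

/-- the standard coassociative 4-plane π = span(e₄,e₅,e₆,e₇) -/
def pi4 : Submodule ℝ (Fin 7 → ℝ) := Submodule.span ℝ {e 3, e 4, e 5, e 6}

/-- its orthogonal (associative) complement π⊥ = span(e₁,e₂,e₃) -/
def pi3 : Submodule ℝ (Fin 7 → ℝ) := Submodule.span ℝ {e 0, e 1, e 2}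

/-- inclusion of coordinates of π⊥ into ℝ⁷ -/
def emb3 (z : Fin 3 → ℝ) : Fin 7 → ℝ := fun i =>
  if i = 0 then z 0 else if i = 1 then z 1 else if i = 2 then z 2 else 0

/-- inclusion of coordinates of π into ℝ⁷ -/
def emb4 (v : Fin 4 → ℝ) : Fin 7 → ℝ := fun i =>
  if i = 3 then v 0 else if i = 4 then v 1 else if i = 5 then v 2 else if i = 6 then v 3 else 0

/-- the structure constants ε_{ijk} of φ: φ = (1/6) Σ ε_{ijk} eⁱ∧eʲ∧eᵏ -/
def eps (i j k : Fin 7) : ℝ := phi (e i) (e j) (e k)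

/-- Bryant's injection i : S²(ℝ⁷) → Λ³(ℝ⁷), i(h) = Σ_{i,j,k,l} ε_{ikl} h_{ij} eʲ∧eᵏ∧eˡ -/
def iForm (h : Matrix (Fin 7) (Fin 7) ℝ) (u v w : Fin 7 → ℝ) : ℝ :=
  ∑ i : Fin 7, ∑ j : Fin 7, ∑ k : Fin 7, ∑ l : Fin 7, eps i k l * h i j * d3 j k l u v w

/-- wedge product of two 2-forms on ℝ⁷, evaluated on 4 vectors -/
def wedge22 (a b : (Fin 7 → ℝ) → (Fin 7 → ℝ) → ℝ) (v : Fin 4 → (Fin 7 → ℝ)) : ℝ :=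
  (∑ σ : Equiv.Perm (Fin 4), ((Equiv.Perm.sign σ : ℤ) : ℝ) *
    (a (v (σ 0)) (v (σ 1)) * b (v (σ 2)) (v (σ 3)))) / 4

/-- B_h(Z₁,Z₂) := (Z₁⌟i(h) ∧ Z₂⌟φ)|_π, as the coefficient of vol₄ = e⁴∧e⁵∧e⁶∧e⁷,
i.e. the value on (e₄,e₅,e₆,e₇); here Z₁, Z₂ ∈ π⊥ have coordinates z₁, z₂. -/
def Bh (h : Matrix (Fin 7) (Fin 7) ℝ) (z₁ z₂ : Fin 3 → ℝ) : ℝ :=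
  wedge22 (fun a b => iForm h (emb3 z₁) a b) (fun a b => phi (emb3 z₂) a b)
    ![e 3, e 4, e 5, e 6]

set_option maxHeartbeats 4000000

lemma phi_swap (u v w : Fin 7 → ℝ) : phi u w v = - phi u v w := by
  unfold phi d3; ring

lemma iForm_swap (h : Matrix (Fin 7) (Fin 7) ℝ) (u v w : Fin 7 → ℝ) :
    iForm h u w v = - iForm h u v w := by
  unfold iForm
  rw [← Finset.sum_neg_distrib]
  refine Finset.sum_congr rfl fun i _ => ?_
  rw [← Finset.sum_neg_distrib]
  refine Finset.sum_congr rfl fun j _ => ?_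
  rw [← Finset.sum_neg_distrib]
  refine Finset.sum_congr rfl fun k _ => ?_
  rw [← Finset.sum_neg_distrib]
  refine Finset.sum_congr rfl fun l _ => ?_
  unfold d3; ring

lemma contract (i : Fin 7) (v w : Fin 7 → ℝ) :
    ∑ k : Fin 7, ∑ l : Fin 7, eps i k l * (v k * w l - v l * w k) = 2 * phi (e i) v w := by
  fin_cases i <;>
    · simp only [Fin.sum_univ_seven]
      simp (config := { decide := true }) [eps, phi, d3, e]
      ring

lemma iForm_eq (h : Matrix (Fin 7) (Fin 7) ℝ) (u v w : Fin 7 → ℝ) :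
    iForm h u v w = ∑ i : Fin 7, ∑ j : Fin 7, h i j *
      (u j * (2 * phi (e i) v w) - v j * (2 * phi (e i) u w) + w j * (2 * phi (e i) u v)) := by
  unfold iForm
  refine Finset.sum_congr rfl fun i _ => Finset.sum_congr rfl fun j _ => ?_
  rw [← contract i v w, ← contract i u w, ← contract i u v]
  simp only [Finset.mul_sum, ← Finset.sum_sub_distrib, ← Finset.sum_add_distrib]
  refine Finset.sum_congr rfl fun k _ => Finset.sum_congr rfl fun l _ => ?_
  simp only [d3]; ring

lemma A34 (h : Matrix (Fin 7) (Fin 7) ℝ) (z₁ : Fin 3 → ℝ) :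
    iForm h (emb3 z₁) (e 3) (e 4) = 2 * h 0 0 * z₁ 0 + 2 * h 0 1 * z₁ 1 + 2 * h 0 2 * z₁ 2 + 2 * h 3 3 * z₁ 0 + 2 * h 4 4 * z₁ 0 + 2 * h 5 3 * z₁ 2 + 2 * h 5 4 * z₁ 1 + 2 * h 6 3 * z₁ 1 - 2 * h 6 4 * z₁ 2 := by
  rw [iForm_eq]
  simp only [Fin.sum_univ_seven]
  simp (config := { decide := true }) [phi, d3, e, emb3]
  ring

lemma A35 (h : Matrix (Fin 7) (Fin 7) ℝ) (z₁ : Fin 3 → ℝ) :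
    iForm h (emb3 z₁) (e 3) (e 5) = 2 * h 1 0 * z₁ 0 + 2 * h 1 1 * z₁ 1 + 2 * h 1 2 * z₁ 2 + 2 * h 3 3 * z₁ 1 - 2 * h 4 3 * z₁ 2 + 2 * h 4 5 * z₁ 0 + 2 * h 5 5 * z₁ 1 - 2 * h 6 3 * z₁ 0 - 2 * h 6 5 * z₁ 2 := by
  rw [iForm_eq]
  simp only [Fin.sum_univ_seven]
  simp (config := { decide := true }) [phi, d3, e, emb3]
  ring

lemma A36 (h : Matrix (Fin 7) (Fin 7) ℝ) (z₁ : Fin 3 → ℝ) :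
    iForm h (emb3 z₁) (e 3) (e 6) = -2 * h 2 0 * z₁ 0 - 2 * h 2 1 * z₁ 1 - 2 * h 2 2 * z₁ 2 - 2 * h 3 3 * z₁ 2 - 2 * h 4 3 * z₁ 1 + 2 * h 4 6 * z₁ 0 + 2 * h 5 3 * z₁ 0 + 2 * h 5 6 * z₁ 1 - 2 * h 6 6 * z₁ 2 := by
  rw [iForm_eq]
  simp only [Fin.sum_univ_seven]
  simp (config := { decide := true }) [phi, d3, e, emb3]
  ring

lemma A45 (h : Matrix (Fin 7) (Fin 7) ℝ) (z₁ : Fin 3 → ℝ) :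
    iForm h (emb3 z₁) (e 4) (e 5) = -2 * h 2 0 * z₁ 0 - 2 * h 2 1 * z₁ 1 - 2 * h 2 2 * z₁ 2 + 2 * h 3 4 * z₁ 1 - 2 * h 3 5 * z₁ 0 - 2 * h 4 4 * z₁ 2 - 2 * h 5 5 * z₁ 2 - 2 * h 6 4 * z₁ 0 - 2 * h 6 5 * z₁ 1 := by
  rw [iForm_eq]
  simp only [Fin.sum_univ_seven]
  simp (config := { decide := true }) [phi, d3, e, emb3]
  ring

lemma A46 (h : Matrix (Fin 7) (Fin 7) ℝ) (z₁ : Fin 3 → ℝ) :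
    iForm h (emb3 z₁) (e 4) (e 6) = -2 * h 1 0 * z₁ 0 - 2 * h 1 1 * z₁ 1 - 2 * h 1 2 * z₁ 2 - 2 * h 3 4 * z₁ 2 - 2 * h 3 6 * z₁ 0 - 2 * h 4 4 * z₁ 1 + 2 * h 5 4 * z₁ 0 - 2 * h 5 6 * z₁ 2 - 2 * h 6 6 * z₁ 1 := by
  rw [iForm_eq]
  simp only [Fin.sum_univ_seven]
  simp (config := { decide := true }) [phi, d3, e, emb3]
  ring

lemma A56 (h : Matrix (Fin 7) (Fin 7) ℝ) (z₁ : Fin 3 → ℝ) :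
    iForm h (emb3 z₁) (e 5) (e 6) = 2 * h 0 0 * z₁ 0 + 2 * h 0 1 * z₁ 1 + 2 * h 0 2 * z₁ 2 - 2 * h 3 5 * z₁ 2 - 2 * h 3 6 * z₁ 1 - 2 * h 4 5 * z₁ 1 + 2 * h 4 6 * z₁ 2 + 2 * h 5 5 * z₁ 0 + 2 * h 6 6 * z₁ 0 := by
  rw [iForm_eq]
  simp only [Fin.sum_univ_seven]
  simp (config := { decide := true }) [phi, d3, e, emb3]
  ring

lemma A43 (h : Matrix (Fin 7) (Fin 7) ℝ) (z₁ : Fin 3 → ℝ) :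
    iForm h (emb3 z₁) (e 4) (e 3) = -2 * h 0 0 * z₁ 0 - 2 * h 0 1 * z₁ 1 - 2 * h 0 2 * z₁ 2 - 2 * h 3 3 * z₁ 0 - 2 * h 4 4 * z₁ 0 - 2 * h 5 3 * z₁ 2 - 2 * h 5 4 * z₁ 1 - 2 * h 6 3 * z₁ 1 + 2 * h 6 4 * z₁ 2 := by
  rw [iForm_swap, A34]; ring

lemma A53 (h : Matrix (Fin 7) (Fin 7) ℝ) (z₁ : Fin 3 → ℝ) :
    iForm h (emb3 z₁) (e 5) (e 3) = -2 * h 1 0 * z₁ 0 - 2 * h 1 1 * z₁ 1 - 2 * h 1 2 * z₁ 2 - 2 * h 3 3 * z₁ 1 + 2 * h 4 3 * z₁ 2 - 2 * h 4 5 * z₁ 0 - 2 * h 5 5 * z₁ 1 + 2 * h 6 3 * z₁ 0 + 2 * h 6 5 * z₁ 2 := by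
  rw [iForm_swap, A35]; ring

lemma A63 (h : Matrix (Fin 7) (Fin 7) ℝ) (z₁ : Fin 3 → ℝ) :
    iForm h (emb3 z₁) (e 6) (e 3) = 2 * h 2 0 * z₁ 0 + 2 * h 2 1 * z₁ 1 + 2 * h 2 2 * z₁ 2 + 2 * h 3 3 * z₁ 2 + 2 * h 4 3 * z₁ 1 - 2 * h 4 6 * z₁ 0 - 2 * h 5 3 * z₁ 0 - 2 * h 5 6 * z₁ 1 + 2 * h 6 6 * z₁ 2 := by
  rw [iForm_swap, A36]; ring

lemma A54 (h : Matrix (Fin 7) (Fin 7) ℝ) (z₁ : Fin 3 → ℝ) :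
    iForm h (emb3 z₁) (e 5) (e 4) = 2 * h 2 0 * z₁ 0 + 2 * h 2 1 * z₁ 1 + 2 * h 2 2 * z₁ 2 - 2 * h 3 4 * z₁ 1 + 2 * h 3 5 * z₁ 0 + 2 * h 4 4 * z₁ 2 + 2 * h 5 5 * z₁ 2 + 2 * h 6 4 * z₁ 0 + 2 * h 6 5 * z₁ 1 := by
  rw [iForm_swap, A45]; ring

lemma A64 (h : Matrix (Fin 7) (Fin 7) ℝ) (z₁ : Fin 3 → ℝ) :
    iForm h (emb3 z₁) (e 6) (e 4) = 2 * h 1 0 * z₁ 0 + 2 * h 1 1 * z₁ 1 + 2 * h 1 2 * z₁ 2 + 2 * h 3 4 * z₁ 2 + 2 * h 3 6 * z₁ 0 + 2 * h 4 4 * z₁ 1 - 2 * h 5 4 * z₁ 0 + 2 * h 5 6 * z₁ 2 + 2 * h 6 6 * z₁ 1 := by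
  rw [iForm_swap, A46]; ring

lemma A65 (h : Matrix (Fin 7) (Fin 7) ℝ) (z₁ : Fin 3 → ℝ) :
    iForm h (emb3 z₁) (e 6) (e 5) = -2 * h 0 0 * z₁ 0 - 2 * h 0 1 * z₁ 1 - 2 * h 0 2 * z₁ 2 + 2 * h 3 5 * z₁ 2 + 2 * h 3 6 * z₁ 1 + 2 * h 4 5 * z₁ 1 - 2 * h 4 6 * z₁ 2 - 2 * h 5 5 * z₁ 0 - 2 * h 6 6 * z₁ 0 := by
  rw [iForm_swap, A56]; ring

lemma B34 (z₂ : Fin 3 → ℝ) :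
    phi (emb3 z₂) (e 3) (e 4) = z₂ 0 := by
  simp (config := { decide := true }) [phi, d3, e, emb3]

lemma B43 (z₂ : Fin 3 → ℝ) :
    phi (emb3 z₂) (e 4) (e 3) = -z₂ 0 := by
  rw [phi_swap, B34]; try ring

lemma B35 (z₂ : Fin 3 → ℝ) :
    phi (emb3 z₂) (e 3) (e 5) = z₂ 1 := by
  simp (config := { decide := true }) [phi, d3, e, emb3]

lemma B53 (z₂ : Fin 3 → ℝ) :
    phi (emb3 z₂) (e 5) (e 3) = -z₂ 1 := by
  rw [phi_swap, B35]; try ring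

lemma B36 (z₂ : Fin 3 → ℝ) :
    phi (emb3 z₂) (e 3) (e 6) = -z₂ 2 := by
  simp (config := { decide := true }) [phi, d3, e, emb3]

lemma B63 (z₂ : Fin 3 → ℝ) :
    phi (emb3 z₂) (e 6) (e 3) = z₂ 2 := by
  rw [phi_swap, B36]; try ring

lemma B45 (z₂ : Fin 3 → ℝ) :
    phi (emb3 z₂) (e 4) (e 5) = -z₂ 2 := by
  simp (config := { decide := true }) [phi, d3, e, emb3]

lemma B54 (z₂ : Fin 3 → ℝ) :
    phi (emb3 z₂) (e 5) (e 4) = z₂ 2 := by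
  rw [phi_swap, B45]; try ring

lemma B46 (z₂ : Fin 3 → ℝ) :
    phi (emb3 z₂) (e 4) (e 6) = -z₂ 1 := by
  simp (config := { decide := true }) [phi, d3, e, emb3]

lemma B64 (z₂ : Fin 3 → ℝ) :
    phi (emb3 z₂) (e 6) (e 4) = z₂ 1 := by
  rw [phi_swap, B46]; try ring

lemma B56 (z₂ : Fin 3 → ℝ) :
    phi (emb3 z₂) (e 5) (e 6) = z₂ 0 := by
  simp (config := { decide := true }) [phi, d3, e, emb3]

lemma B65 (z₂ : Fin 3 → ℝ) :
    phi (emb3 z₂) (e 6) (e 5) = -z₂ 0 := by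
  rw [phi_swap, B56]; try ring

open Equiv in
lemma perm_univ : (Finset.univ : Finset (Equiv.Perm (Fin 4))) =
    {(1 : Equiv.Perm (Fin 4)),
     (c[2, 3] : Equiv.Perm (Fin 4)),
     (c[1, 2] : Equiv.Perm (Fin 4)),
     (c[1, 2, 3] : Equiv.Perm (Fin 4)),
     (c[1, 3, 2] : Equiv.Perm (Fin 4)),
     (c[1, 3] : Equiv.Perm (Fin 4)),
     (c[0, 1] : Equiv.Perm (Fin 4)),
     (c[0, 1] * c[2, 3] : Equiv.Perm (Fin 4)),
     (c[0, 1, 2] : Equiv.Perm (Fin 4)),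
     (c[0, 1, 2, 3] : Equiv.Perm (Fin 4)),
     (c[0, 1, 3, 2] : Equiv.Perm (Fin 4)),
     (c[0, 1, 3] : Equiv.Perm (Fin 4)),
     (c[0, 2, 1] : Equiv.Perm (Fin 4)),
     (c[0, 2, 3, 1] : Equiv.Perm (Fin 4)),
     (c[0, 2] : Equiv.Perm (Fin 4)),
     (c[0, 2, 3] : Equiv.Perm (Fin 4)),
     (c[0, 2] * c[1, 3] : Equiv.Perm (Fin 4)),
     (c[0, 2, 1, 3] : Equiv.Perm (Fin 4)),
     (c[0, 3, 2, 1] : Equiv.Perm (Fin 4)),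
     (c[0, 3, 1] : Equiv.Perm (Fin 4)),
     (c[0, 3, 2] : Equiv.Perm (Fin 4)),
     (c[0, 3] : Equiv.Perm (Fin 4)),
     (c[0, 3, 1, 2] : Equiv.Perm (Fin 4)),
     (c[0, 3] * c[1, 2] : Equiv.Perm (Fin 4))} := by decide

open Equiv in
lemma perm_sum24 (F : Equiv.Perm (Fin 4) → ℝ) :
    ∑ σ : Equiv.Perm (Fin 4), F σ =
      F (1 : Equiv.Perm (Fin 4))
      + F (c[2, 3] : Equiv.Perm (Fin 4))
      + F (c[1, 2] : Equiv.Perm (Fin 4))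
      + F (c[1, 2, 3] : Equiv.Perm (Fin 4))
      + F (c[1, 3, 2] : Equiv.Perm (Fin 4))
      + F (c[1, 3] : Equiv.Perm (Fin 4))
      + F (c[0, 1] : Equiv.Perm (Fin 4))
      + F (c[0, 1] * c[2, 3] : Equiv.Perm (Fin 4))
      + F (c[0, 1, 2] : Equiv.Perm (Fin 4))
      + F (c[0, 1, 2, 3] : Equiv.Perm (Fin 4))
      + F (c[0, 1, 3, 2] : Equiv.Perm (Fin 4))
      + F (c[0, 1, 3] : Equiv.Perm (Fin 4))
      + F (c[0, 2, 1] : Equiv.Perm (Fin 4))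
      + F (c[0, 2, 3, 1] : Equiv.Perm (Fin 4))
      + F (c[0, 2] : Equiv.Perm (Fin 4))
      + F (c[0, 2, 3] : Equiv.Perm (Fin 4))
      + F (c[0, 2] * c[1, 3] : Equiv.Perm (Fin 4))
      + F (c[0, 2, 1, 3] : Equiv.Perm (Fin 4))
      + F (c[0, 3, 2, 1] : Equiv.Perm (Fin 4))
      + F (c[0, 3, 1] : Equiv.Perm (Fin 4))
      + F (c[0, 3, 2] : Equiv.Perm (Fin 4))
      + F (c[0, 3] : Equiv.Perm (Fin 4))
      + F (c[0, 3, 1, 2] : Equiv.Perm (Fin 4))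
      + F (c[0, 3] * c[1, 2] : Equiv.Perm (Fin 4)) := by
  rw [perm_univ]
  rw [Finset.sum_insert (by decide),
      Finset.sum_insert (by decide),
      Finset.sum_insert (by decide),
      Finset.sum_insert (by decide),
      Finset.sum_insert (by decide),
      Finset.sum_insert (by decide),
      Finset.sum_insert (by decide),
      Finset.sum_insert (by decide),
      Finset.sum_insert (by decide),
      Finset.sum_insert (by decide),
      Finset.sum_insert (by decide),
      Finset.sum_insert (by decide),
      Finset.sum_insert (by decide),
      Finset.sum_insert (by decide),
      Finset.sum_insert (by decide),
      Finset.sum_insert (by decide),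
      Finset.sum_insert (by decide),
      Finset.sum_insert (by decide),
      Finset.sum_insert (by decide),
      Finset.sum_insert (by decide),
      Finset.sum_insert (by decide),
      Finset.sum_insert (by decide),
      Finset.sum_insert (by decide),
      Finset.sum_singleton]
  ring

open Equiv in
/-- For a symmetric 2-tensor h on ℝ⁷ and Z₁, Z₂ ∈ π⊥:
B_h(Z₁,Z₂) = (4 h(Z₁,Z₂) + 2 tr(h|_π) g(Z₁,Z₂)) · vol₄. -/
theorem stmt_10 (h : Matrix (Fin 7) (Fin 7) ℝ) (hsymm : h.IsSymm) (z₁ z₂ : Fin 3 → ℝ) :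
    Bh h z₁ z₂
      = 4 * (∑ i : Fin 3, ∑ j : Fin 3, z₁ i * z₂ j *
            h (Fin.castLE (by norm_num) i) (Fin.castLE (by norm_num) j))
        + 2 * (h 3 3 + h 4 4 + h 5 5 + h 6 6) * (∑ i : Fin 3, z₁ i * z₂ i) := by
  have hs := fun i j => Matrix.IsSymm.apply hsymm i j
  unfold Bh wedge22
  rw [perm_sum24]
  simp only [show Equiv.Perm.sign (1 : Equiv.Perm (Fin 4)) = 1 from by decide,
    show Equiv.Perm.sign (c[2, 3] : Equiv.Perm (Fin 4)) = -1 from by decide,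
    show Equiv.Perm.sign (c[1, 2] : Equiv.Perm (Fin 4)) = -1 from by decide,
    show Equiv.Perm.sign (c[1, 2, 3] : Equiv.Perm (Fin 4)) = 1 from by decide,
    show Equiv.Perm.sign (c[1, 3, 2] : Equiv.Perm (Fin 4)) = 1 from by decide,
    show Equiv.Perm.sign (c[1, 3] : Equiv.Perm (Fin 4)) = -1 from by decide,
    show Equiv.Perm.sign (c[0, 1] : Equiv.Perm (Fin 4)) = -1 from by decide,
    show Equiv.Perm.sign (c[0, 1] * c[2, 3] : Equiv.Perm (Fin 4)) = 1 from by decide,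
    show Equiv.Perm.sign (c[0, 1, 2] : Equiv.Perm (Fin 4)) = 1 from by decide,
    show Equiv.Perm.sign (c[0, 1, 2, 3] : Equiv.Perm (Fin 4)) = -1 from by decide,
    show Equiv.Perm.sign (c[0, 1, 3, 2] : Equiv.Perm (Fin 4)) = -1 from by decide,
    show Equiv.Perm.sign (c[0, 1, 3] : Equiv.Perm (Fin 4)) = 1 from by decide,
    show Equiv.Perm.sign (c[0, 2, 1] : Equiv.Perm (Fin 4)) = 1 from by decide,
    show Equiv.Perm.sign (c[0, 2, 3, 1] : Equiv.Perm (Fin 4)) = -1 from by decide,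
    show Equiv.Perm.sign (c[0, 2] : Equiv.Perm (Fin 4)) = -1 from by decide,
    show Equiv.Perm.sign (c[0, 2, 3] : Equiv.Perm (Fin 4)) = 1 from by decide,
    show Equiv.Perm.sign (c[0, 2] * c[1, 3] : Equiv.Perm (Fin 4)) = 1 from by decide,
    show Equiv.Perm.sign (c[0, 2, 1, 3] : Equiv.Perm (Fin 4)) = -1 from by decide,
    show Equiv.Perm.sign (c[0, 3, 2, 1] : Equiv.Perm (Fin 4)) = -1 from by decide,
    show Equiv.Perm.sign (c[0, 3, 1] : Equiv.Perm (Fin 4)) = 1 from by decide,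
    show Equiv.Perm.sign (c[0, 3, 2] : Equiv.Perm (Fin 4)) = 1 from by decide,
    show Equiv.Perm.sign (c[0, 3] : Equiv.Perm (Fin 4)) = -1 from by decide,
    show Equiv.Perm.sign (c[0, 3, 1, 2] : Equiv.Perm (Fin 4)) = -1 from by decide,
    show Equiv.Perm.sign (c[0, 3] * c[1, 2] : Equiv.Perm (Fin 4)) = 1 from by decide,
    show ((1 : Equiv.Perm (Fin 4)) 0 : Fin 4) = 0 from by decide,
    show ((1 : Equiv.Perm (Fin 4)) 1 : Fin 4) = 1 from by decide,
    show ((1 : Equiv.Perm (Fin 4)) 2 : Fin 4) = 2 from by decide,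
    show ((1 : Equiv.Perm (Fin 4)) 3 : Fin 4) = 3 from by decide,
    show ((c[2, 3] : Equiv.Perm (Fin 4)) 0 : Fin 4) = 0 from by decide,
    show ((c[2, 3] : Equiv.Perm (Fin 4)) 1 : Fin 4) = 1 from by decide,
    show ((c[2, 3] : Equiv.Perm (Fin 4)) 2 : Fin 4) = 3 from by decide,
    show ((c[2, 3] : Equiv.Perm (Fin 4)) 3 : Fin 4) = 2 from by decide,
    show ((c[1, 2] : Equiv.Perm (Fin 4)) 0 : Fin 4) = 0 from by decide,
    show ((c[1, 2] : Equiv.Perm (Fin 4)) 1 : Fin 4) = 2 from by decide,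
    show ((c[1, 2] : Equiv.Perm (Fin 4)) 2 : Fin 4) = 1 from by decide,
    show ((c[1, 2] : Equiv.Perm (Fin 4)) 3 : Fin 4) = 3 from by decide,
    show ((c[1, 2, 3] : Equiv.Perm (Fin 4)) 0 : Fin 4) = 0 from by decide,
    show ((c[1, 2, 3] : Equiv.Perm (Fin 4)) 1 : Fin 4) = 2 from by decide,
    show ((c[1, 2, 3] : Equiv.Perm (Fin 4)) 2 : Fin 4) = 3 from by decide,
    show ((c[1, 2, 3] : Equiv.Perm (Fin 4)) 3 : Fin 4) = 1 from by decide,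
    show ((c[1, 3, 2] : Equiv.Perm (Fin 4)) 0 : Fin 4) = 0 from by decide,
    show ((c[1, 3, 2] : Equiv.Perm (Fin 4)) 1 : Fin 4) = 3 from by decide,
    show ((c[1, 3, 2] : Equiv.Perm (Fin 4)) 2 : Fin 4) = 1 from by decide,
    show ((c[1, 3, 2] : Equiv.Perm (Fin 4)) 3 : Fin 4) = 2 from by decide,
    show ((c[1, 3] : Equiv.Perm (Fin 4)) 0 : Fin 4) = 0 from by decide,
    show ((c[1, 3] : Equiv.Perm (Fin 4)) 1 : Fin 4) = 3 from by decide,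
    show ((c[1, 3] : Equiv.Perm (Fin 4)) 2 : Fin 4) = 2 from by decide,
    show ((c[1, 3] : Equiv.Perm (Fin 4)) 3 : Fin 4) = 1 from by decide,
    show ((c[0, 1] : Equiv.Perm (Fin 4)) 0 : Fin 4) = 1 from by decide,
    show ((c[0, 1] : Equiv.Perm (Fin 4)) 1 : Fin 4) = 0 from by decide,
    show ((c[0, 1] : Equiv.Perm (Fin 4)) 2 : Fin 4) = 2 from by decide,
    show ((c[0, 1] : Equiv.Perm (Fin 4)) 3 : Fin 4) = 3 from by decide,
    show ((c[0, 1] * c[2, 3] : Equiv.Perm (Fin 4)) 0 : Fin 4) = 1 from by decide,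
    show ((c[0, 1] * c[2, 3] : Equiv.Perm (Fin 4)) 1 : Fin 4) = 0 from by decide,
    show ((c[0, 1] * c[2, 3] : Equiv.Perm (Fin 4)) 2 : Fin 4) = 3 from by decide,
    show ((c[0, 1] * c[2, 3] : Equiv.Perm (Fin 4)) 3 : Fin 4) = 2 from by decide,
    show ((c[0, 1, 2] : Equiv.Perm (Fin 4)) 0 : Fin 4) = 1 from by decide,
    show ((c[0, 1, 2] : Equiv.Perm (Fin 4)) 1 : Fin 4) = 2 from by decide,
    show ((c[0, 1, 2] : Equiv.Perm (Fin 4)) 2 : Fin 4) = 0 from by decide,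
    show ((c[0, 1, 2] : Equiv.Perm (Fin 4)) 3 : Fin 4) = 3 from by decide,
    show ((c[0, 1, 2, 3] : Equiv.Perm (Fin 4)) 0 : Fin 4) = 1 from by decide,
    show ((c[0, 1, 2, 3] : Equiv.Perm (Fin 4)) 1 : Fin 4) = 2 from by decide,
    show ((c[0, 1, 2, 3] : Equiv.Perm (Fin 4)) 2 : Fin 4) = 3 from by decide,
    show ((c[0, 1, 2, 3] : Equiv.Perm (Fin 4)) 3 : Fin 4) = 0 from by decide,
    show ((c[0, 1, 3, 2] : Equiv.Perm (Fin 4)) 0 : Fin 4) = 1 from by decide,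
    show ((c[0, 1, 3, 2] : Equiv.Perm (Fin 4)) 1 : Fin 4) = 3 from by decide,
    show ((c[0, 1, 3, 2] : Equiv.Perm (Fin 4)) 2 : Fin 4) = 0 from by decide,
    show ((c[0, 1, 3, 2] : Equiv.Perm (Fin 4)) 3 : Fin 4) = 2 from by decide,
    show ((c[0, 1, 3] : Equiv.Perm (Fin 4)) 0 : Fin 4) = 1 from by decide,
    show ((c[0, 1, 3] : Equiv.Perm (Fin 4)) 1 : Fin 4) = 3 from by decide,
    show ((c[0, 1, 3] : Equiv.Perm (Fin 4)) 2 : Fin 4) = 2 from by decide,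
    show ((c[0, 1, 3] : Equiv.Perm (Fin 4)) 3 : Fin 4) = 0 from by decide,
    show ((c[0, 2, 1] : Equiv.Perm (Fin 4)) 0 : Fin 4) = 2 from by decide,
    show ((c[0, 2, 1] : Equiv.Perm (Fin 4)) 1 : Fin 4) = 0 from by decide,
    show ((c[0, 2, 1] : Equiv.Perm (Fin 4)) 2 : Fin 4) = 1 from by decide,
    show ((c[0, 2, 1] : Equiv.Perm (Fin 4)) 3 : Fin 4) = 3 from by decide,
    show ((c[0, 2, 3, 1] : Equiv.Perm (Fin 4)) 0 : Fin 4) = 2 from by decide,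
    show ((c[0, 2, 3, 1] : Equiv.Perm (Fin 4)) 1 : Fin 4) = 0 from by decide,
    show ((c[0, 2, 3, 1] : Equiv.Perm (Fin 4)) 2 : Fin 4) = 3 from by decide,
    show ((c[0, 2, 3, 1] : Equiv.Perm (Fin 4)) 3 : Fin 4) = 1 from by decide,
    show ((c[0, 2] : Equiv.Perm (Fin 4)) 0 : Fin 4) = 2 from by decide,
    show ((c[0, 2] : Equiv.Perm (Fin 4)) 1 : Fin 4) = 1 from by decide,
    show ((c[0, 2] : Equiv.Perm (Fin 4)) 2 : Fin 4) = 0 from by decide,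
    show ((c[0, 2] : Equiv.Perm (Fin 4)) 3 : Fin 4) = 3 from by decide,
    show ((c[0, 2, 3] : Equiv.Perm (Fin 4)) 0 : Fin 4) = 2 from by decide,
    show ((c[0, 2, 3] : Equiv.Perm (Fin 4)) 1 : Fin 4) = 1 from by decide,
    show ((c[0, 2, 3] : Equiv.Perm (Fin 4)) 2 : Fin 4) = 3 from by decide,
    show ((c[0, 2, 3] : Equiv.Perm (Fin 4)) 3 : Fin 4) = 0 from by decide,
    show ((c[0, 2] * c[1, 3] : Equiv.Perm (Fin 4)) 0 : Fin 4) = 2 from by decide,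
    show ((c[0, 2] * c[1, 3] : Equiv.Perm (Fin 4)) 1 : Fin 4) = 3 from by decide,
    show ((c[0, 2] * c[1, 3] : Equiv.Perm (Fin 4)) 2 : Fin 4) = 0 from by decide,
    show ((c[0, 2] * c[1, 3] : Equiv.Perm (Fin 4)) 3 : Fin 4) = 1 from by decide,
    show ((c[0, 2, 1, 3] : Equiv.Perm (Fin 4)) 0 : Fin 4) = 2 from by decide,
    show ((c[0, 2, 1, 3] : Equiv.Perm (Fin 4)) 1 : Fin 4) = 3 from by decide,
    show ((c[0, 2, 1, 3] : Equiv.Perm (Fin 4)) 2 : Fin 4) = 1 from by decide,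
    show ((c[0, 2, 1, 3] : Equiv.Perm (Fin 4)) 3 : Fin 4) = 0 from by decide,
    show ((c[0, 3, 2, 1] : Equiv.Perm (Fin 4)) 0 : Fin 4) = 3 from by decide,
    show ((c[0, 3, 2, 1] : Equiv.Perm (Fin 4)) 1 : Fin 4) = 0 from by decide,
    show ((c[0, 3, 2, 1] : Equiv.Perm (Fin 4)) 2 : Fin 4) = 1 from by decide,
    show ((c[0, 3, 2, 1] : Equiv.Perm (Fin 4)) 3 : Fin 4) = 2 from by decide,
    show ((c[0, 3, 1] : Equiv.Perm (Fin 4)) 0 : Fin 4) = 3 from by decide,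
    show ((c[0, 3, 1] : Equiv.Perm (Fin 4)) 1 : Fin 4) = 0 from by decide,
    show ((c[0, 3, 1] : Equiv.Perm (Fin 4)) 2 : Fin 4) = 2 from by decide,
    show ((c[0, 3, 1] : Equiv.Perm (Fin 4)) 3 : Fin 4) = 1 from by decide,
    show ((c[0, 3, 2] : Equiv.Perm (Fin 4)) 0 : Fin 4) = 3 from by decide,
    show ((c[0, 3, 2] : Equiv.Perm (Fin 4)) 1 : Fin 4) = 1 from by decide,
    show ((c[0, 3, 2] : Equiv.Perm (Fin 4)) 2 : Fin 4) = 0 from by decide,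
    show ((c[0, 3, 2] : Equiv.Perm (Fin 4)) 3 : Fin 4) = 2 from by decide,
    show ((c[0, 3] : Equiv.Perm (Fin 4)) 0 : Fin 4) = 3 from by decide,
    show ((c[0, 3] : Equiv.Perm (Fin 4)) 1 : Fin 4) = 1 from by decide,
    show ((c[0, 3] : Equiv.Perm (Fin 4)) 2 : Fin 4) = 2 from by decide,
    show ((c[0, 3] : Equiv.Perm (Fin 4)) 3 : Fin 4) = 0 from by decide,
    show ((c[0, 3, 1, 2] : Equiv.Perm (Fin 4)) 0 : Fin 4) = 3 from by decide,
    show ((c[0, 3, 1, 2] : Equiv.Perm (Fin 4)) 1 : Fin 4) = 2 from by decide,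
    show ((c[0, 3, 1, 2] : Equiv.Perm (Fin 4)) 2 : Fin 4) = 0 from by decide,
    show ((c[0, 3, 1, 2] : Equiv.Perm (Fin 4)) 3 : Fin 4) = 1 from by decide,
    show ((c[0, 3] * c[1, 2] : Equiv.Perm (Fin 4)) 0 : Fin 4) = 3 from by decide,
    show ((c[0, 3] * c[1, 2] : Equiv.Perm (Fin 4)) 1 : Fin 4) = 2 from by decide,
    show ((c[0, 3] * c[1, 2] : Equiv.Perm (Fin 4)) 2 : Fin 4) = 1 from by decide,
    show ((c[0, 3] * c[1, 2] : Equiv.Perm (Fin 4)) 3 : Fin 4) = 0 from by decide,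
    Units.val_one, Units.val_neg, Int.cast_one, Int.cast_neg,
    show ![e 3, e 4, e 5, e 6] (0 : Fin 4) = e 3 from rfl,
    show ![e 3, e 4, e 5, e 6] (1 : Fin 4) = e 4 from rfl,
    show ![e 3, e 4, e 5, e 6] (2 : Fin 4) = e 5 from rfl,
    show ![e 3, e 4, e 5, e 6] (3 : Fin 4) = e 6 from rfl]
  simp only [A34, A35, A36, A43, A45, A46, A53, A54, A56, A63, A64, A65, B34, B35, B36, B43, B45, B46, B53, B54, B56, B63, B64, B65]
  simp only [Fin.sum_univ_three,
    show ∀ hle : (3:ℕ) ≤ 7, Fin.castLE hle 0 = (0 : Fin 7) from fun _ => rfl,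
    show ∀ hle : (3:ℕ) ≤ 7, Fin.castLE hle 1 = (1 : Fin 7) from fun _ => rfl,
    show ∀ hle : (3:ℕ) ≤ 7, Fin.castLE hle 2 = (2 : Fin 7) from fun _ => rfl]
  simp only [hs 0 1,
    hs 0 2,
    hs 0 3,
    hs 0 4,
    hs 0 5,
    hs 0 6,
    hs 1 2,
    hs 1 3,
    hs 1 4,
    hs 1 5,
    hs 1 6,
    hs 2 3,
    hs 2 4,
    hs 2 5,
    hs 2 6,
    hs 3 4,
    hs 3 5,
    hs 3 6,
    hs 4 5,
    hs 4 6,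
    hs 5 6]
  ring
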